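/- If there exists T > 0 such that 48·( ‖E‖/T + r(T)·x(T)/σ_min + r(T)·‖E‖²/(T·σ_min) ) < 1, then the least singular value of Ã = A + E satisfies σ̃_min ≥ σ_min/2. -/

import Mathlib

open Matrix

/-- Spectral (ℓ²-operator) norm of a real matrix. -/
noncomputable def matOpNorm {m n : ℕ} (M : Matrix (Fin m) (Fin n) ℝ) : ℝ :=
  ‖LinearMap.toContinuousLinearMap (Matrix.toEuclideanLin M)‖

lemma dot_self_eq_norm_sq {n : ℕ} (w : Fin n → ℝ) :
    w ⬝ᵥ w = ‖(WithLp.equiv 2 (Fin n → ℝ)).symm w‖ ^ 2 := by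
  rw [← real_inner_self_eq_norm_sq]
  simp [PiLp.inner_apply, dotProduct, RCLike.inner_apply, mul_comm]
  rw [EuclideanSpace.norm_eq, Real.sq_sqrt (Finset.sum_nonneg fun i _ => by positivity)]
  simp [sq, Real.norm_eq_abs]

lemma dot_opNorm {m n : ℕ} (M : Matrix (Fin m) (Fin n) ℝ) (w : Fin n → ℝ) :
    (M *ᵥ w) ⬝ᵥ (M *ᵥ w) ≤ matOpNorm M ^ 2 * (w ⬝ᵥ w) := by
  have h := (LinearMap.toContinuousLinearMap (Matrix.toEuclideanLin M)).le_opNorm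
    ((WithLp.equiv 2 (Fin n → ℝ)).symm w)
  have h2 : (LinearMap.toContinuousLinearMap (Matrix.toEuclideanLin M))
      ((WithLp.equiv 2 (Fin n → ℝ)).symm w) = (WithLp.equiv 2 (Fin m → ℝ)).symm (M *ᵥ w) := rfl
  rw [h2] at h
  rw [dot_self_eq_norm_sq, dot_self_eq_norm_sq]
  calc ‖(WithLp.equiv 2 (Fin m → ℝ)).symm (M *ᵥ w)‖ ^ 2
      ≤ (matOpNorm M * ‖(WithLp.equiv 2 (Fin n → ℝ)).symm w‖) ^ 2 :=
        pow_le_pow_left₀ (norm_nonneg _) h 2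
    _ = matOpNorm M ^ 2 * ‖(WithLp.equiv 2 (Fin n → ℝ)).symm w‖ ^ 2 := by ring

section
variable {n : ℕ} (u : Fin n → Fin n → ℝ)

lemma UtU (hu : ∀ i j, u i ⬝ᵥ u j = if i = j then (1 : ℝ) else 0) :
    (Matrix.of u)ᵀ * (Matrix.of u) = 1 := by
  rw [mul_eq_one_comm]
  ext i j
  simpa [Matrix.mul_apply, Matrix.one_apply, dotProduct] using hu i j

lemma parseval (hu : ∀ i j, u i ⬝ᵥ u j = if i = j then (1 : ℝ) else 0) (w : Fin n → ℝ) :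
    ∑ i, (u i ⬝ᵥ w) ^ 2 = w ⬝ᵥ w := by
  have h1 : ∑ i, (u i ⬝ᵥ w) ^ 2 = (Matrix.of u *ᵥ w) ⬝ᵥ (Matrix.of u *ᵥ w) := by
    simp [dotProduct, Matrix.mulVec, sq]
  rw [h1, Matrix.dotProduct_mulVec, ← Matrix.mulVec_transpose, Matrix.mulVec_mulVec,
    UtU u hu, Matrix.one_mulVec, dotProduct_comm]

lemma decomp (hu : ∀ i j, u i ⬝ᵥ u j = if i = j then (1 : ℝ) else 0) (w : Fin n → ℝ) :
    w = ∑ i, (u i ⬝ᵥ w) • u i := by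
  have h : (Matrix.of u)ᵀ *ᵥ (Matrix.of u *ᵥ w) = w := by
    rw [Matrix.mulVec_mulVec, UtU u hu, Matrix.one_mulVec]
  conv_lhs => rw [← h]
  funext k
  simp only [Matrix.mulVec, dotProduct, Matrix.transpose_apply, Matrix.of_apply,
    Finset.sum_apply, Pi.smul_apply, smul_eq_mul]
  congr 1
  funext i
  ring

lemma dot_mulVec_decomp (hu : ∀ i j, u i ⬝ᵥ u j = if i = j then (1 : ℝ) else 0)
    (M : Matrix (Fin n) (Fin n) ℝ) (w : Fin n → ℝ) (i : Fin n) :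
    u i ⬝ᵥ (M *ᵥ w) = ∑ j, (u j ⬝ᵥ w) * (u i ⬝ᵥ (M *ᵥ u j)) := by
  have h : M *ᵥ w = ∑ j, (u j ⬝ᵥ w) • (M *ᵥ u j) := by
    have h2 : M.mulVecLin (∑ j, (u j ⬝ᵥ w) • u j) = ∑ j, (u j ⬝ᵥ w) • M.mulVecLin (u j) := by
      rw [map_sum]
      exact Finset.sum_congr rfl fun j _ => (Matrix.mulVecLin M).map_smul _ _
    conv_lhs => rw [decomp u hu w]
    conv_rhs => rw [show (fun j => (u j ⬝ᵥ w) • M *ᵥ u j) = fun j => (u j ⬝ᵥ w) • M.mulVecLin (u j) from rfl]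
    exact h2
  rw [h]
  simp only [dotProduct, Finset.sum_apply, Pi.smul_apply, smul_eq_mul, Finset.mul_sum,
    Finset.sum_mul]
  rw [Finset.sum_comm]
  exact Finset.sum_congr rfl fun j _ => Finset.sum_congr rfl fun k _ => Finset.sum_congr rfl fun l _ => by ring

end

set_option maxHeartbeats 1600000 in
/-- Theorem 4.6: stability of the least singular value. -/
theorem least_singular_value_stability
    {n : ℕ} (A E : Matrix (Fin n) (Fin n) ℝ)
    (lam tlam : Fin n → ℝ) (u tu : Fin n → (Fin n → ℝ))
    (hA : A.IsSymm) (hE : E.IsSymm)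
    (hlam : Antitone lam) (htlam : Antitone tlam)
    (hu : ∀ i j, u i ⬝ᵥ u j = if i = j then (1 : ℝ) else 0)
    (htu : ∀ i j, tu i ⬝ᵥ tu j = if i = j then (1 : ℝ) else 0)
    (hAu : ∀ i, A *ᵥ u i = lam i • u i)
    (hAtu : ∀ i, (A + E) *ᵥ tu i = tlam i • tu i)
    -- σ_min and σ̃_min, the least singular values of A and Ã :
    (smin tsmin : ℝ)
    (hsmin : IsLeast {t | ∃ i : Fin n, t = |lam i|} smin)
    (htsmin : IsLeast {t | ∃ i : Fin n, t = |tlam i|} tsmin)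
    -- A has full rank :
    (hsminpos : 0 < smin)
    -- there is T > 0 making the key quantity small :
    (T : ℝ) (hT : 0 < T)
    (Λ : Finset (Fin n)) (hΛ : ∀ i : Fin n, i ∈ Λ ↔ |lam i| ≤ T)
    (xT : ℝ)
    (hxT : IsLUB (insert (0 : ℝ)
      {t | ∃ i ∈ Λ, ∃ j ∈ Λ, t = |u i ⬝ᵥ (E *ᵥ u j)|}) xT)
    (hcond : 48 * (matOpNorm E / T + Λ.card * xT / smin +
      Λ.card * matOpNorm E ^ 2 / (T * smin)) < 1) :
    smin / 2 ≤ tsmin := by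
  by_contra hcon
  push_neg at hcon
  obtain ⟨i₀, hi₀⟩ := htsmin.1
  set nE := matOpNorm E with hnEdef
  have hnE0 : (0:ℝ) ≤ nE := norm_nonneg _
  have hx0 : (0:ℝ) ≤ xT := hxT.1 (Set.mem_insert 0 _)
  set r : ℝ := (Λ.card : ℝ) with hrdef
  have hr0 : (0:ℝ) ≤ r := Nat.cast_nonneg _
  -- split the condition
  have ha' : nE < T / 48 := by
    have h1 : (0:ℝ) ≤ r * xT / smin := by positivity
    have h2 : (0:ℝ) ≤ r * nE ^ 2 / (T * smin) := by positivity
    have h3 : nE / T < 1 / 48 := by linarith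
    rw [div_lt_div_iff₀ hT (by norm_num : (0:ℝ) < 48)] at h3
    linarith
  have hb' : r * xT < smin / 48 := by
    have h1 : (0:ℝ) ≤ nE / T := by positivity
    have h2 : (0:ℝ) ≤ r * nE ^ 2 / (T * smin) := by positivity
    have h3 : r * xT / smin < 1 / 48 := by linarith
    rw [div_lt_div_iff₀ hsminpos (by norm_num : (0:ℝ) < 48)] at h3
    linarith
  have hc' : r * nE ^ 2 < T * smin / 48 := by
    have h1 : (0:ℝ) ≤ nE / T := by positivity
    have h2 : (0:ℝ) ≤ r * xT / smin := by positivity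
    have h3 : r * nE ^ 2 / (T * smin) < 1 / 48 := by linarith
    rw [div_lt_div_iff₀ (mul_pos hT hsminpos) (by norm_num : (0:ℝ) < 48)] at h3
    linarith
  set v : Fin n → ℝ := tu i₀ with hvdef
  set μ : ℝ := tlam i₀ with hμdef
  have hμabs : |μ| < smin / 2 := by rw [← hi₀]; exact hcon
  have hvv : v ⬝ᵥ v = 1 := by simpa using htu i₀ i₀
  set c : Fin n → ℝ := fun i => u i ⬝ᵥ v with hcdef
  set d : Fin n → ℝ := fun i => u i ⬝ᵥ (E *ᵥ v) with hddef
  set e : Fin n → Fin n → ℝ := fun i j => u i ⬝ᵥ (E *ᵥ u j) with hedef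
  have hsle : ∀ i, smin ≤ |lam i| := fun i => hsmin.2 ⟨i, rfl⟩
  -- eigenvalue equation componentwise
  have heig : ∀ i, d i = (μ - lam i) * c i := by
    intro i
    have h1 : u i ⬝ᵥ ((A + E) *ᵥ v) = μ * c i := by
      rw [hAtu i₀]
      simp [dotProduct_smul, smul_eq_mul, hcdef]
      rfl
    have h2 : u i ⬝ᵥ (A *ᵥ v) = lam i * c i := by
      rw [Matrix.dotProduct_mulVec]
      have h3 : u i ᵥ* A = A *ᵥ u i := by
        conv_lhs => rw [← hA.eq]
        rw [Matrix.vecMul_transpose]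
      rw [h3, hAu i, smul_dotProduct]
      rfl
    rw [Matrix.add_mulVec, dotProduct_add, h2] at h1
    linear_combination h1
  -- basic lower bounds on |d i|
  have hcd : ∀ i, smin / 2 * |c i| ≤ |d i| := by
    intro i
    have h1 : |lam i| - |μ| ≤ |μ - lam i| := by
      rw [abs_sub_comm]; exact abs_sub_abs_le_abs_sub _ _
    have h2 : smin / 2 ≤ |μ - lam i| := by
      have := hsle i; linarith
    calc smin / 2 * |c i| ≤ |μ - lam i| * |c i| :=
          mul_le_mul_of_nonneg_right h2 (abs_nonneg _)
      _ = |d i| := by rw [heig i, abs_mul]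
  have hcdT : ∀ j, j ∉ Λ → T / 2 * |c j| ≤ |d j| := by
    intro j hj
    have hTlt : T < |lam j| := by
      by_contra hle
      exact hj ((hΛ j).mpr (not_lt.mp hle))
    have h1 : |lam j| - |μ| ≤ |μ - lam j| := by
      rw [abs_sub_comm]; exact abs_sub_abs_le_abs_sub _ _
    have h2 : T / 2 ≤ |μ - lam j| := by
      have := hsle j; linarith
    calc T / 2 * |c j| ≤ |μ - lam j| * |c j| :=
          mul_le_mul_of_nonneg_right h2 (abs_nonneg _)
      _ = |d j| := by rw [heig j, abs_mul]
  -- Parseval identities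
  have hP1 : ∑ i, c i ^ 2 = 1 := by
    rw [show ∑ i, c i ^ 2 = ∑ i, (u i ⬝ᵥ v) ^ 2 from rfl, parseval u hu v, hvv]
  have hP2 : ∑ i, d i ^ 2 ≤ nE ^ 2 := by
    have h1 : ∑ i, d i ^ 2 = (E *ᵥ v) ⬝ᵥ (E *ᵥ v) := parseval u hu (E *ᵥ v)
    have h2 := dot_opNorm E v
    rw [hvv] at h2
    rw [h1]
    simpa using h2
  have hesymm : ∀ i j, e i j = u j ⬝ᵥ (E *ᵥ u i) := by
    intro i j
    show u i ⬝ᵥ (E *ᵥ u j) = _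
    rw [Matrix.dotProduct_mulVec]
    have h3 : u i ᵥ* E = E *ᵥ u i := by
      conv_lhs => rw [← hE.eq]
      rw [Matrix.vecMul_transpose]
    rw [h3, dotProduct_comm]
  have hPe : ∀ i, ∑ j, e i j ^ 2 ≤ nE ^ 2 := by
    intro i
    have h1 : ∑ j, e i j ^ 2 = (E *ᵥ u i) ⬝ᵥ (E *ᵥ u i) := by
      rw [show ∑ j, e i j ^ 2 = ∑ j, (u j ⬝ᵥ (E *ᵥ u i)) ^ 2 from
        Finset.sum_congr rfl fun j _ => by rw [hesymm i j]]
      exact parseval u hu _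
    have h2 := dot_opNorm E (u i)
    have h3 : u i ⬝ᵥ u i = 1 := by simpa using hu i i
    rw [h3] at h2
    rw [h1]
    simpa using h2
  have hdec : ∀ i, d i = ∑ j, c j * e i j := fun i => dot_mulVec_decomp u hu E v i
  set S : ℝ := ∑ j ∈ Λ, |c j| with hSdef
  have hS0 : (0:ℝ) ≤ S := Finset.sum_nonneg fun j _ => abs_nonneg _
  -- off-diagonal bound
  have hoff : ∀ i, T * (∑ j ∈ Λᶜ, |c j| * |e i j|) ≤ 2 * nE ^ 2 := by
    intro i
    have hstep : ∀ j ∈ Λᶜ, T * (|c j| * |e i j|) ≤ 2 * (|d j| * |e i j|) := by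
      intro j hj
      have h1 := hcdT j (Finset.mem_compl.mp hj)
      have h2 := mul_le_mul_of_nonneg_right h1 (abs_nonneg (e i j))
      linarith
    have hCS : (∑ j ∈ Λᶜ, |d j| * |e i j|) ^ 2 ≤
        (∑ j ∈ Λᶜ, |d j| ^ 2) * (∑ j ∈ Λᶜ, |e i j| ^ 2) :=
      Finset.sum_mul_sq_le_sq_mul_sq _ _ _
    have hd2 : ∑ j ∈ Λᶜ, |d j| ^ 2 ≤ nE ^ 2 := by
      calc ∑ j ∈ Λᶜ, |d j| ^ 2 = ∑ j ∈ Λᶜ, d j ^ 2 := by simp [sq_abs]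
        _ ≤ ∑ j, d j ^ 2 := Finset.sum_le_univ_sum_of_nonneg fun j => sq_nonneg _
        _ ≤ nE ^ 2 := hP2
    have he2 : ∑ j ∈ Λᶜ, |e i j| ^ 2 ≤ nE ^ 2 := by
      calc ∑ j ∈ Λᶜ, |e i j| ^ 2 = ∑ j ∈ Λᶜ, e i j ^ 2 := by simp [sq_abs]
        _ ≤ ∑ j, e i j ^ 2 := Finset.sum_le_univ_sum_of_nonneg fun j => sq_nonneg _
        _ ≤ nE ^ 2 := hPe i
    have hden : (0:ℝ) ≤ ∑ j ∈ Λᶜ, |d j| * |e i j| :=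
      Finset.sum_nonneg fun j _ => mul_nonneg (abs_nonneg _) (abs_nonneg _)
    have hde : ∑ j ∈ Λᶜ, |d j| * |e i j| ≤ nE ^ 2 := by
      have hnE2nn : (0:ℝ) ≤ nE ^ 2 := sq_nonneg nE
      have hsq : (∑ j ∈ Λᶜ, |d j| * |e i j|) ^ 2 ≤ nE ^ 2 * nE ^ 2 :=
        le_trans hCS (mul_le_mul hd2 he2
          (Finset.sum_nonneg fun j _ => sq_nonneg _) hnE2nn)
      have hsq2 : (∑ j ∈ Λᶜ, |d j| * |e i j|) ^ 2 ≤ (nE ^ 2) ^ 2 := by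
        calc (∑ j ∈ Λᶜ, |d j| * |e i j|) ^ 2 ≤ nE ^ 2 * nE ^ 2 := hsq
          _ = (nE ^ 2) ^ 2 := by ring
      exact (pow_le_pow_iff_left₀ hden hnE2nn two_ne_zero).mp hsq2
    calc T * (∑ j ∈ Λᶜ, |c j| * |e i j|) = ∑ j ∈ Λᶜ, T * (|c j| * |e i j|) := by
          rw [Finset.mul_sum]
      _ ≤ ∑ j ∈ Λᶜ, 2 * (|d j| * |e i j|) := Finset.sum_le_sum hstep
      _ = 2 * ∑ j ∈ Λᶜ, |d j| * |e i j| := by rw [Finset.mul_sum]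
      _ ≤ 2 * nE ^ 2 := by linarith
  -- bound on |d i| for i ∈ Λ
  have hdΛ : ∀ i ∈ Λ, T * |d i| ≤ T * (xT * S) + 2 * nE ^ 2 := by
    intro i hi
    have hsplit : d i = (∑ j ∈ Λ, c j * e i j) + ∑ j ∈ Λᶜ, c j * e i j := by
      rw [hdec i]; exact (Finset.sum_add_sum_compl Λ _).symm
    have habs1 : |∑ j ∈ Λ, c j * e i j| ≤ xT * S := by
      calc |∑ j ∈ Λ, c j * e i j| ≤ ∑ j ∈ Λ, |c j * e i j| := Finset.abs_sum_le_sum_abs _ _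
        _ = ∑ j ∈ Λ, |c j| * |e i j| := by simp [abs_mul]
        _ ≤ ∑ j ∈ Λ, |c j| * xT := by
            refine Finset.sum_le_sum fun j hj => ?_
            refine mul_le_mul_of_nonneg_left ?_ (abs_nonneg _)
            exact hxT.1 (Set.mem_insert_of_mem _ ⟨i, hi, j, hj, rfl⟩)
        _ = xT * S := by
            rw [hSdef, Finset.mul_sum]
            exact Finset.sum_congr rfl fun j _ => mul_comm _ _
    have habs2 : |∑ j ∈ Λᶜ, c j * e i j| ≤ ∑ j ∈ Λᶜ, |c j| * |e i j| := by
      calc |∑ j ∈ Λᶜ, c j * e i j| ≤ ∑ j ∈ Λᶜ, |c j * e i j| := Finset.abs_sum_le_sum_abs _ _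
        _ = ∑ j ∈ Λᶜ, |c j| * |e i j| := by simp [abs_mul]
    have hdi : |d i| ≤ xT * S + ∑ j ∈ Λᶜ, |c j| * |e i j| := by
      rw [hsplit]
      calc |(∑ j ∈ Λ, c j * e i j) + ∑ j ∈ Λᶜ, c j * e i j| ≤
          |∑ j ∈ Λ, c j * e i j| + |∑ j ∈ Λᶜ, c j * e i j| := abs_add_le _ _
        _ ≤ xT * S + ∑ j ∈ Λᶜ, |c j| * |e i j| := by linarith
    have h4 := mul_le_mul_of_nonneg_left hdi hT.le
    rw [mul_add] at h4
    linarith [hoff i]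
  -- summing over Λ
  have hSsum : T * (smin / 2) * S ≤ r * (T * (xT * S) + 2 * nE ^ 2) := by
    have hterm : ∀ i ∈ Λ, T * (smin / 2) * |c i| ≤ T * (xT * S) + 2 * nE ^ 2 := by
      intro i hi
      have h1 := mul_le_mul_of_nonneg_left (hcd i) hT.le
      have h2 := hdΛ i hi
      calc T * (smin / 2) * |c i| = T * (smin / 2 * |c i|) := by ring
        _ ≤ T * |d i| := h1
        _ ≤ T * (xT * S) + 2 * nE ^ 2 := h2
    calc T * (smin / 2) * S = ∑ i ∈ Λ, T * (smin / 2) * |c i| := by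
          rw [hSdef, Finset.mul_sum]
      _ ≤ ∑ i ∈ Λ, (T * (xT * S) + 2 * nE ^ 2) := Finset.sum_le_sum hterm
      _ = r * (T * (xT * S) + 2 * nE ^ 2) := by
          rw [Finset.sum_const, nsmul_eq_mul, hrdef]
  -- deduce S ≤ 2/23
  have hS23 : 23 * S ≤ 2 := by
    have k1 : r * xT * S ≤ smin / 48 * S := mul_le_mul_of_nonneg_right hb'.le hS0
    have k1T : T * (r * xT * S) ≤ T * (smin / 48 * S) := mul_le_mul_of_nonneg_left k1 hT.le
    have k2 : r * nE ^ 2 ≤ T * smin / 48 := hc'.le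
    have k2T : 2 * (r * nE ^ 2) ≤ 2 * (T * smin / 48) := by linarith
    have expand : r * (T * (xT * S) + 2 * nE ^ 2) = T * (r * xT * S) + 2 * (r * nE ^ 2) := by
      ring
    rw [expand] at hSsum
    have main : T * smin * (23 * S) ≤ T * smin * 2 := by linarith [hSsum, k1T, k2T]
    exact le_of_mul_le_mul_left main (mul_pos hT hsminpos)
  -- sum of squares bounds
  have hsum1 : ∑ i ∈ Λ, c i ^ 2 ≤ S ^ 2 := by
    calc ∑ i ∈ Λ, c i ^ 2 = ∑ i ∈ Λ, |c i| ^ 2 := by simp [sq_abs]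
      _ ≤ S ^ 2 := Finset.sum_sq_le_sq_sum_of_nonneg fun i _ => abs_nonneg _
  have hsum2 : T ^ 2 * ∑ i ∈ Λᶜ, c i ^ 2 ≤ 4 * nE ^ 2 := by
    have hterm : ∀ i ∈ Λᶜ, T ^ 2 * c i ^ 2 ≤ 4 * d i ^ 2 := by
      intro i hi
      have h1 := hcdT i (Finset.mem_compl.mp hi)
      rw [← sq_abs (c i), ← sq_abs (d i)]
      have h2 := mul_self_le_mul_self
        (mul_nonneg (by linarith : (0:ℝ) ≤ T / 2) (abs_nonneg (c i))) h1
      linarith [h2]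
    have h2 : ∑ i ∈ Λᶜ, d i ^ 2 ≤ nE ^ 2 :=
      le_trans (Finset.sum_le_univ_sum_of_nonneg fun j => sq_nonneg _) hP2
    calc T ^ 2 * ∑ i ∈ Λᶜ, c i ^ 2 = ∑ i ∈ Λᶜ, T ^ 2 * c i ^ 2 := by rw [Finset.mul_sum]
      _ ≤ ∑ i ∈ Λᶜ, 4 * d i ^ 2 := Finset.sum_le_sum hterm
      _ = 4 * ∑ i ∈ Λᶜ, d i ^ 2 := by rw [Finset.mul_sum]
      _ ≤ 4 * nE ^ 2 := by linarith
  -- final contradiction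
  have hsplit1 : (∑ i ∈ Λ, c i ^ 2) + ∑ i ∈ Λᶜ, c i ^ 2 = 1 := by
    rw [Finset.sum_add_sum_compl, hP1]
  have hT2 : (0:ℝ) < T ^ 2 := by positivity
  have hnE2 : nE ^ 2 ≤ T ^ 2 / 2304 := by
    have := mul_self_le_mul_self hnE0 ha'.le
    nlinarith [this]
  have hQ : ∑ i ∈ Λᶜ, c i ^ 2 ≤ 1 / 576 := by
    have h5 : T ^ 2 * (∑ i ∈ Λᶜ, c i ^ 2) ≤ T ^ 2 * (1 / 576) := by linarith
    exact le_of_mul_le_mul_left h5 hT2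
  have hP : ∑ i ∈ Λ, c i ^ 2 ≤ 4 / 529 := by
    have hS2 : S ^ 2 ≤ 4 / 529 := by
      have := mul_self_le_mul_self hS0 (by linarith : S ≤ 2 / 23)
      nlinarith [this]
    linarith
  linarith
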